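/- Let G be the graph of a medium (S, T) (vertices are states, edges join pairs of states related by a token). If m = τ₁…τₘ is a concise message producing state Q from state P, then the sequence of intermediate states P = P₀, P₁, …, Pₘ = Q with Pᵢ = Pτ₁⋯τᵢ is a shortest path from P to Q in G. Conversely, every shortest path from P to Q in G arises from a concise message producing Q from P. -/

import Mathlib

variable {S : Type*}

/-- Result of applying message `m` (a list of tokens) to state `P`. -/
def mApply (m : List (S → S)) (P : S) : S := m.foldl (fun s τ => τ s) P

/-- `τ'` is a reverse of `τ`. -/
def IsReverse (τ τ' : S → S) : Prop := ∀ P Q : S, P ≠ Q → (τ P = Q ↔ τ' Q = P)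

/-- `(S, T)` is a token system. -/
def IsTokenSystem (T : Set (S → S)) : Prop :=
  Nontrivial S ∧ T.Nonempty ∧ ∀ τ ∈ T, τ ≠ id

/-- `m` is a message of the token system with token set `T`. -/
def IsMsg (T : Set (S → S)) (m : List (S → S)) : Prop := ∀ τ ∈ m, τ ∈ T

/-- `m` is stepwise effective for `P`. -/
def StepwiseEff : List (S → S) → S → Prop
  | [], _ => True
  | τ :: rest, P => τ P ≠ P ∧ StepwiseEff rest (τ P)

/-- `m` is consistent: it contains no token together with a reverse of it. -/
def Consistent (m : List (S → S)) : Prop :=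
  ∀ τ ∈ m, ∀ τ' ∈ m, ¬ IsReverse τ τ'

/-- `m` is concise for `P`. -/
def Concise (T : Set (S → S)) (m : List (S → S)) (P : S) : Prop :=
  IsMsg T m ∧ Consistent m ∧ StepwiseEff m P ∧ m.Nodup

/-- `m` is a return message for `P`. -/
def IsReturn (m : List (S → S)) (P : S) : Prop :=
  StepwiseEff m P ∧ mApply m P = P

/-- `m` is vacuous: its indices partition into pairs of mutually reverse tokens. -/
def Vacuous (m : List (S → S)) : Prop :=
  ∃ σ : Equiv.Perm (Fin m.length),
    (∀ i, σ i ≠ i) ∧ (∀ i, σ (σ i) = i) ∧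
    ∀ i, IsReverse (m.get i) (m.get (σ i))

/-- `(S, T)` is a medium: token system satisfying [Ma] and [Mb]. -/
def IsMedium (T : Set (S → S)) : Prop :=
  IsTokenSystem T ∧
  (∀ P Q : S, P ≠ Q → ∃ m, Concise T m P ∧ mApply m P = Q) ∧
  (∀ (m : List (S → S)) (P : S), IsMsg T m → IsReturn m P → Vacuous m)

/-- Content of a message: its set of tokens. -/
def msgContent (m : List (S → S)) : Set (S → S) := {τ | τ ∈ m}

/-- Token content of a state `P`. -/
def SContent (T : Set (S → S)) (P : S) : Set (S → S) :=
  {τ | ∃ (V : S) (m : List (S → S)), Concise T m V ∧ mApply m V = P ∧ τ ∈ m}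

/-- `mr` is the reverse message `τ̃ₙ…τ̃₁` of `m = τ₁…τₙ`. -/
def IsReverseOfMsg (m mr : List (S → S)) : Prop :=
  List.Forall₂ (fun τ τ' => IsReverse τ τ' ∧ IsReverse τ' τ) m mr.reverse

/-- The graph of a medium: states are vertices, token-adjacent states are joined. -/
def mediumGraph (T : Set (S → S)) : SimpleGraph S where
  Adj P Q := P ≠ Q ∧ ∃ τ ∈ T, τ P = Q ∨ τ Q = P
  symm := by
    constructor
    rintro P Q ⟨h, τ, hτ, hor⟩
    exact ⟨h.symm, τ, hτ, hor.symm⟩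
  loopless := by
    constructor
    rintro P ⟨h, -⟩
    exact h rfl

variable {V : Type*}

/-- The like relation on arcs of a graph:
`ab L cd` iff `d(a,c) + 1 = d(b,d) + 1 = d(a,d) = d(b,c)`. -/
def Like (G : SimpleGraph V) (a b c d : V) : Prop :=
  G.Adj a b ∧ G.Adj c d ∧
    G.dist a c + 1 = G.dist b d + 1 ∧ G.dist b d + 1 = G.dist a d ∧
    G.dist a d = G.dist b c

/-- A graph is mediatic if it is connected, bipartite, and its like relation is transitive. -/
def IsMediatic (G : SimpleGraph V) : Prop :=
  G.Connected ∧ G.Colorable 2 ∧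
    ∀ a b c d e f : V, Like G a b c d → Like G c d e f → Like G a b e f

section Aux
variable {S : Type*}

lemma mApply_nil (P : S) : mApply [] P = P := rfl

lemma mApply_cons (τ : S → S) (m : List (S → S)) (P : S) :
    mApply (τ :: m) P = mApply m (τ P) := rfl

lemma mApply_append (a b : List (S → S)) (P : S) :
    mApply (a ++ b) P = mApply b (mApply a P) := by
  simp [mApply, List.foldl_append]

lemma stepwiseEff_append {a b : List (S → S)} {P : S} :
    StepwiseEff (a ++ b) P ↔ StepwiseEff a P ∧ StepwiseEff b (mApply a P) := by
  induction a generalizing P with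
  | nil => simp [StepwiseEff, mApply_nil]
  | cons τ rest ih =>
      simp only [List.cons_append, StepwiseEff, mApply_cons]
      rw [and_assoc]
      exact and_congr_right fun _ => ih

lemma isReverse_symm {τ τ' : S → S} (h : IsReverse τ τ') : IsReverse τ' τ := by
  intro P Q hPQ
  exact (h Q P hPQ.symm).symm

lemma eq_of_agree {τ τ' : S → S} (h : ∀ P Q : S, P ≠ Q → (τ P = Q ↔ τ' P = Q)) :
    τ = τ' := by
  funext x
  by_cases hx : τ x = x
  · by_contra hne
    exact hne ((h x (τ' x) (fun e => hne (hx.trans e))).mpr rfl)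
  · exact ((h x (τ x) (fun e => hx e.symm)).mp rfl).symm

lemma reverse_unique {τ τ' ρ : S → S} (h : IsReverse τ ρ) (h' : IsReverse τ' ρ) :
    τ = τ' := by
  refine eq_of_agree fun P Q hPQ => ?_
  rw [h P Q hPQ, h' P Q hPQ]

lemma isReverse_chain {x a y b : S → S} (hxa : IsReverse x a) (hyb : IsReverse y b)
    (hxy : IsReverse x y) : IsReverse a b := by
  intro P Q hPQ
  rw [(isReverse_symm hxa) P Q hPQ, ← (isReverse_symm hxy) P Q hPQ]
  exact hyb P Q hPQ

lemma stepwiseEff_take {m : List (S → S)} {P : S} (h : StepwiseEff m P) (i : ℕ) :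
    StepwiseEff (m.take i) P := by
  have := stepwiseEff_append (a := m.take i) (b := m.drop i) (P := P)
  rw [List.take_append_drop] at this
  exact (this.mp h).1

lemma exists_reverse {T : Set (S → S)} (hM : IsMedium T) {τ : S → S} (hτ : τ ∈ T)
    {A : S} (hAB : τ A ≠ A) : ∃ τ' ∈ T, IsReverse τ τ' := by
  obtain ⟨hTS, hMa, hMb⟩ := hM
  obtain ⟨c, hc, hcB⟩ := hMa (τ A) A hAB
  have hret : IsReturn (τ :: c) A := by
    refine ⟨⟨hAB, hc.2.2.1⟩, ?_⟩
    rw [mApply_cons, hcB]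
  have hmsg : IsMsg T (τ :: c) := by
    intro ρ hρ
    rcases List.mem_cons.mp hρ with h | h
    · exact h ▸ hτ
    · exact hc.1 ρ h
  obtain ⟨σ, hσ1, hσ2, hσ3⟩ := hMb (τ :: c) A hmsg hret
  have hlen : 0 < (τ :: c).length := by simp
  set i0 : Fin (τ :: c).length := ⟨0, hlen⟩
  have hrev := hσ3 i0
  have hne : (σ i0).val ≠ 0 := fun h => hσ1 i0 (Fin.ext h)
  refine ⟨(τ :: c).get (σ i0), ?_, hrev⟩
  exact hmsg _ (List.get_mem _ (σ i0))

lemma exists_reverse_msg {T : Set (S → S)} (hM : IsMedium T) :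
    ∀ (m : List (S → S)) (P : S), IsMsg T m → StepwiseEff m P →
    ∃ mr : List (S → S), IsMsg T mr ∧ StepwiseEff mr (mApply m P) ∧
      mApply mr (mApply m P) = P ∧ List.Forall₂ IsReverse m mr.reverse := by
  intro m
  induction m with
  | nil => exact fun P _ _ => ⟨[], fun τ h => absurd h List.not_mem_nil, trivial, rfl, List.Forall₂.nil⟩
  | cons τ rest ih =>
      intro P hmsg hse
      obtain ⟨hτP, hse'⟩ := hse
      obtain ⟨mr', h1, h2, h3, h4⟩ := ih (τ P) (fun ρ h => hmsg ρ (List.mem_cons_of_mem _ h)) hse'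
      obtain ⟨τ', hτ'T, hτ'rev⟩ := exists_reverse hM (hmsg τ (List.mem_cons_self)) hτP
      have hτ'app : τ' (τ P) = P := (hτ'rev P (τ P) (Ne.symm hτP)).mp rfl
      refine ⟨mr' ++ [τ'], ?_, ?_, ?_, ?_⟩
      · intro ρ hρ
        rcases List.mem_append.mp hρ with h | h
        · exact h1 ρ h
        · rw [List.mem_singleton.mp h]; exact hτ'T
      · rw [mApply_cons, stepwiseEff_append, h3]
        refine ⟨h2, ?_, trivial⟩
        rw [hτ'app]
        exact Ne.symm hτP
      · rw [mApply_cons, mApply_append, h3]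
        exact hτ'app
      · rw [List.reverse_append, List.reverse_singleton]
        exact List.Forall₂.cons hτ'rev h4

lemma msg_to_walk {T : Set (S → S)} :
    ∀ (m : List (S → S)) (P : S), IsMsg T m → StepwiseEff m P →
    ∃ w : (mediumGraph T).Walk P (mApply m P), w.length = m.length := by
  intro m
  induction m with
  | nil => exact fun P _ _ => ⟨SimpleGraph.Walk.nil, rfl⟩
  | cons τ rest ih =>
      intro P hmsg hse
      obtain ⟨hτP, hse'⟩ := hse
      obtain ⟨w, hw⟩ := ih (τ P) (fun ρ h => hmsg ρ (List.mem_cons_of_mem _ h)) hse'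
      have hadj : (mediumGraph T).Adj P (τ P) :=
        ⟨Ne.symm hτP, τ, hmsg τ (List.mem_cons_self), Or.inl rfl⟩
      exact ⟨SimpleGraph.Walk.cons hadj w, by show _ = rest.length + 1; rw [← hw]; rfl⟩

lemma walk_to_msg {T : Set (S → S)} (hM : IsMedium T) {P Q : S}
    (w : (mediumGraph T).Walk P Q) :
    ∃ m : List (S → S), IsMsg T m ∧ StepwiseEff m P ∧ mApply m P = Q ∧
      m.length = w.length ∧ ∀ i ≤ w.length, w.getVert i = mApply (m.take i) P := by
  induction w with
  | nil => exact ⟨[], fun τ h => absurd h List.not_mem_nil, trivial, rfl, rfl,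
      fun i hi => by rw [Nat.le_zero.mp hi]; rfl⟩
  | @cons A B C hadj w ih =>
      obtain ⟨m', h1, h2, h3, h4, h5⟩ := ih
      obtain ⟨hne, τ, hτT, hor⟩ := hadj
      have : ∃ ρ ∈ T, ρ A = B := by
        rcases hor with h | h
        · exact ⟨τ, hτT, h⟩
        · obtain ⟨τ', hτ'T, hrev⟩ := exists_reverse hM hτT (h.trans_ne hne)
          exact ⟨τ', hτ'T, (hrev B A hne.symm).mp h⟩
      obtain ⟨ρ, hρT, hρA⟩ := this
      refine ⟨ρ :: m', ?_, ?_, ?_, ?_, ?_⟩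
      · intro x hx
        rcases List.mem_cons.mp hx with h | h
        · exact h ▸ hρT
        · exact h1 x h
      · exact ⟨hρA.trans_ne hne.symm, by rw [hρA]; exact h2⟩
      · rw [mApply_cons, hρA]; exact h3
      · simp [h4]; rfl
      · intro i hi
        match i with
        | 0 => rfl
        | (i+1) =>
            simp only [SimpleGraph.Walk.getVert_cons_succ, List.take_succ_cons, mApply_cons, hρA]
            exact h5 i (by have hi' : i + 1 ≤ w.length + 1 := hi; omega)

lemma concise_return_nil {T : Set (S → S)} (hM : IsMedium T) {m : List (S → S)} {P : S}
    (hc : Concise T m P) (hret : mApply m P = P) : m = [] := by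
  by_contra hne
  obtain ⟨σ, hσ1, hσ2, hσ3⟩ := hM.2.2 m P hc.1 ⟨hc.2.2.1, hret⟩
  have hlen : 0 < m.length := List.length_pos_iff.mpr hne
  exact hc.2.1 _ (List.get_mem _ ⟨0, hlen⟩) _
    (List.get_mem _ (σ ⟨0, hlen⟩)) (hσ3 ⟨0, hlen⟩)

lemma key_lemma {T : Set (S → S)} (hM : IsMedium T) {m c : List (S → S)} {P Q : S}
    (hm : IsMsg T m) (hse : StepwiseEff m P) (hmQ : mApply m P = Q)
    (hc : Concise T c P) (hcQ : mApply c P = Q) :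
    c.length ≤ m.length ∧ (m.length = c.length → Concise T m P) := by
  classical
  obtain ⟨cr, hcr1, hcr2, hcr3, hcr4⟩ := exists_reverse_msg hM c P hc.1 hc.2.2.1
  rw [hcQ] at hcr2 hcr3
  have hlenc : c.length = cr.length := by simpa using hcr4.length_eq
  set n := m.length with hn
  set k := cr.length with hk
  have hpair : ∀ x (hx : x < k),
      IsReverse (c.get ⟨k - 1 - x, by omega⟩) (cr.get ⟨x, hx⟩) := by
    intro x hx
    have h1 : k - 1 - x < c.length := by omega
    have h2 : k - 1 - x < cr.reverse.length := by simp only [List.length_reverse]; omega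
    have h := (List.forall₂_iff_get.mp hcr4).2 (k - 1 - x) h1 h2
    have e : cr.reverse.get ⟨k - 1 - x, h2⟩ = cr.get ⟨x, hx⟩ := by
      simp only [List.get_eq_getElem, List.getElem_reverse]
      congr 1
      omega
    rwa [e] at h
  have hmsgr : IsMsg T (m ++ cr) := fun τ hτ => (List.mem_append.mp hτ).elim (hm τ) (hcr1 τ)
  have hretr : IsReturn (m ++ cr) P :=
    ⟨by rw [stepwiseEff_append, hmQ]; exact ⟨hse, hcr2⟩, by rw [mApply_append, hmQ]; exact hcr3⟩
  obtain ⟨σ, hσ1, hσ2, hσ3⟩ := hM.2.2 (m ++ cr) P hmsgr hretr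
  have hL : (m ++ cr).length = n + k := by simp [hn, hk]
  have hgetr : ∀ (i : Fin (m ++ cr).length) (h : i.val < n),
      (m ++ cr).get i = m.get ⟨i.val, h⟩ := by
    intro i h
    simp only [List.get_eq_getElem]
    exact List.getElem_append_left h
  have hgetl : ∀ (i : Fin (m ++ cr).length) (h : n ≤ i.val),
      (m ++ cr).get i = cr.get ⟨i.val - n, by have := i.2; omega⟩ := by
    intro i h
    simp only [List.get_eq_getElem]
    exact List.getElem_append_right h
  have hB : ∀ i : Fin (m ++ cr).length, n ≤ i.val → (σ i).val < n := by
    intro i hi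
    by_contra hge
    push_neg at hge
    have hxi : i.val - n < k := by have := i.2; omega
    have hyi : (σ i).val - n < k := by have := (σ i).2; omega
    have hrev : IsReverse (cr.get ⟨i.val - n, hxi⟩) (cr.get ⟨(σ i).val - n, hyi⟩) := by
      have h := hσ3 i
      rwa [hgetl i hi, hgetl (σ i) hge] at h
    have h1 := hpair _ hxi
    have h2 := hpair _ hyi
    have h3 := isReverse_chain (isReverse_symm h1) (isReverse_symm h2) hrev
    exact hc.2.1 _ (List.get_mem _ _) _ (List.get_mem _ _) h3
  have hemb : ∀ x : Fin k, n + x.val < (m ++ cr).length := by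
    intro x; have := x.2; omega
  let f : Fin k → Fin n := fun x =>
    ⟨(σ ⟨n + x.val, hemb x⟩).val, hB _ (Nat.le_add_right n x.val)⟩
  have hfinj : Function.Injective f := by
    intro x y hxy
    have h0 := congrArg Fin.val hxy
    have h1 : σ ⟨n + x.val, hemb x⟩ = σ ⟨n + y.val, hemb y⟩ := Fin.ext h0
    have h2 := σ.injective h1
    have h3 : n + x.val = n + y.val := congrArg Fin.val h2
    exact Fin.ext (by omega)
  have hkn : k ≤ n := by simpa using Fintype.card_le_of_injective f hfinj
  refine ⟨by omega, ?_⟩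
  intro heq
  have hnk : n = k := by omega
  have hfsurj : Function.Surjective f := by
    have hb := (Fintype.bijective_iff_injective_and_card f).mpr ⟨hfinj, by simp [hnk]⟩
    exact hb.2
  have hmemL : ∀ i : Fin n, i.val < (m ++ cr).length := by
    intro i; have := i.2; omega
  have hA : ∀ (i : Fin (m ++ cr).length) (hi : i.val < n),
      ∃ x : Fin k, σ i = ⟨n + x.val, hemb x⟩ := by
    intro i hi
    obtain ⟨x, hx⟩ := hfsurj ⟨i.val, hi⟩
    have h0 := congrArg Fin.val hx
    have hσeq : σ ⟨n + x.val, hemb x⟩ = i := Fin.ext h0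
    refine ⟨x, ?_⟩
    rw [← hσeq, hσ2]
  have hkey : ∀ i : Fin n, ∃ x : Fin k,
      m.get i = c.get ⟨k - 1 - x.val, by have := x.isLt; omega⟩ ∧
      σ ⟨i.val, hmemL i⟩ = ⟨n + x.val, hemb x⟩ := by
    intro i
    obtain ⟨x, hx⟩ := hA ⟨i.val, hmemL i⟩ i.2
    refine ⟨x, ?_, hx⟩
    have e1 : (m ++ cr).get ⟨i.val, hmemL i⟩ = m.get i := hgetr _ i.2
    have e2 : (m ++ cr).get ⟨n + x.val, hemb x⟩ = cr.get x :=
      (hgetl _ (Nat.le_add_right _ _)).trans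
        (congrArg cr.get (Fin.ext (by simp)))
    have hrev1 : IsReverse (m.get i) (cr.get x) := by
      have h := hσ3 ⟨i.val, hmemL i⟩
      rwa [hx, e2, e1] at h
    exact reverse_unique hrev1 (hpair x.val x.2)
  choose g hg1 hg2 using hkey
  have hginj : Function.Injective g := by
    intro i j hij
    have h1 : σ ⟨i.val, hmemL i⟩ = σ ⟨j.val, hmemL j⟩ := by
      rw [hg2 i, hg2 j, hij]
    have h2 := σ.injective h1
    have h3 : (⟨i.val, hmemL i⟩ : Fin (m ++ cr).length).val =
        (⟨j.val, hmemL j⟩ : Fin (m ++ cr).length).val := congrArg Fin.val h2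
    exact Fin.ext h3
  have hnodup : m.Nodup := by
    rw [List.nodup_iff_injective_get]
    intro i j hij
    rw [hg1 i, hg1 j] at hij
    have h1 := List.nodup_iff_injective_get.mp hc.2.2.2 hij
    have h2 : k - 1 - (g i).val = k - 1 - (g j).val := congrArg Fin.val h1
    have hgi := (g i).isLt
    have hgj := (g j).isLt
    exact hginj (Fin.ext (by omega))
  have hcons : Consistent m := by
    intro τ hτ τ' hτ' hrev
    obtain ⟨i, hi⟩ := List.mem_iff_get.mp hτ
    obtain ⟨j, hj⟩ := List.mem_iff_get.mp hτ'
    rw [← hi, ← hj, hg1 i, hg1 j] at hrev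
    exact hc.2.1 _ (List.get_mem _ _) _ (List.get_mem _ _) hrev
  exact ⟨hm, hcons, hse, hnodup⟩

lemma concise_length_eq_dist {T : Set (S → S)} (hM : IsMedium T) {m : List (S → S)} {P Q : S}
    (hc : Concise T m P) (hQ : mApply m P = Q) :
    m.length = (mediumGraph T).dist P Q := by
  by_cases hPQ : P = Q
  · subst hPQ
    rw [concise_return_nil hM hc hQ]
    simp [SimpleGraph.dist_self]
  · obtain ⟨w0, hw0⟩ := msg_to_walk m P hc.1 hc.2.2.1
    set w : (mediumGraph T).Walk P Q := w0.copy rfl hQ with hw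
    have hdle : (mediumGraph T).dist P Q ≤ m.length := by
      have h := SimpleGraph.dist_le w
      rwa [hw, SimpleGraph.Walk.length_copy, hw0] at h
    have hreach : (mediumGraph T).Reachable P Q := ⟨w⟩
    obtain ⟨w', hw'⟩ := hreach.exists_walk_length_eq_dist
    obtain ⟨m', h1, h2, h3, h4, h5⟩ := walk_to_msg hM w'
    have hkl := (key_lemma hM h1 h2 h3 hc hQ).1
    omega

end Aux

/-- Concise messages correspond to shortest paths in the graph of a medium. -/
theorem stmt12 {T : Set (S → S)} (hM : IsMedium T) (P Q : S) :
    (∀ m : List (S → S), Concise T m P → mApply m P = Q →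
      (∀ i < m.length,
        (mediumGraph T).Adj (mApply (m.take i) P) (mApply (m.take (i + 1)) P)) ∧
      m.length = (mediumGraph T).dist P Q) ∧
    (∀ w : (mediumGraph T).Walk P Q, w.IsPath → w.length = (mediumGraph T).dist P Q →
      ∃ m : List (S → S), Concise T m P ∧ mApply m P = Q ∧ m.length = w.length ∧
        ∀ i ≤ w.length, w.getVert i = mApply (m.take i) P) := by
  constructor
  · intro m hc hQ
    constructor
    · intro i hi
      have hse := hc.2.2.1
      have htk : StepwiseEff (m.take (i + 1)) P := stepwiseEff_take hse (i + 1)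
      have hsplit : m.take (i + 1) = m.take i ++ [m.get ⟨i, hi⟩] := by
        rw [List.take_succ]
        simp [List.getElem?_eq_getElem hi]
      rw [hsplit, stepwiseEff_append] at htk
      have heff : m.get ⟨i, hi⟩ (mApply (m.take i) P) ≠ mApply (m.take i) P := htk.2.1
      have happ : mApply (m.take (i + 1)) P = m.get ⟨i, hi⟩ (mApply (m.take i) P) := by
        rw [hsplit, mApply_append]
        rfl
      refine ⟨?_, m.get ⟨i, hi⟩, hc.1 _ (List.get_mem _ _), Or.inl ?_⟩
      · rw [happ]
        exact Ne.symm heff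
      · rw [happ]
    · exact concise_length_eq_dist hM hc hQ
  · intro w _ hlen
    obtain ⟨m, h1, h2, h3, h4, h5⟩ := walk_to_msg hM w
    by_cases hPQ : P = Q
    · subst hPQ
      have h0 : w.length = 0 := by
        rw [hlen]
        simp [SimpleGraph.dist_self]
      have hm0 : m = [] := List.length_eq_zero_iff.mp (by omega)
      subst hm0
      exact ⟨[], ⟨h1, fun τ hτ => absurd hτ List.not_mem_nil, h2, List.nodup_nil⟩,
        h3, h4, h5⟩
    · obtain ⟨c, hcC, hcQ⟩ := hM.2.1 P Q hPQ
      have hclen := concise_length_eq_dist hM hcC hcQ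
      have hkey := key_lemma hM h1 h2 h3 hcC hcQ
      have hmc : m.length = c.length := by omega
      exact ⟨m, hkey.2 hmc, h3, h4, h5⟩
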